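/- Let G = (Σ, N, S, R, p) be a stochastic context-free grammar, i.e. a context-free grammar with finite terminal alphabet Σ, finite set of nonterminals N = {A_1, …, A_m} with start symbol S = A_1, finite rule set R, and a weight p : R → [0,1]. Assume G is proper (for every nonterminal A_i, the sum of p over all rules with premise A_i equals 1) and reduced (p(π) > 0 for every rule π and every nonterminal is useful, i.e. accessible from S and deriving some terminal string). Let M be the m×m expectation matrix M_{i,n} = Σ_j p(A_i → B_{i,j}) · r_n(i,j), where the sum is over all rules with premise A_i and r_n(i,j) is the number of occurrences of A_n in the right-hand side B_{i,j}. If the spectral radius ρ(M) < 1, then G is consistent at the start symbol: Σ_{π̄ ∈ Ω_1} p(π̄) = 1, where Ω_1 is the set of all complete leftmost derivations starting at A_1 and ending in a terminal string, and p(π₁⋯π_N) = p(π₁)⋯p(π_N). -/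

import Mathlib

/-- A stochastic context-free grammar with nonterminals `Fin m` (start symbol `0`,
playing the role of `A₁`), terminals `Fin k`, rules indexed by the finite type `ρ`
(with premise `prem π` and right-hand side `rhs π`), and a weight
`p : ρ → [0,1]`. -/
structure SCFG (m k : ℕ) (ρ : Type) [Fintype ρ] where
  prem : ρ → Fin m
  rhs : ρ → List (Fin m ⊕ Fin k)
  p : ρ → ℝ
  p_nonneg : ∀ π, 0 ≤ p π
  p_le_one : ∀ π, p π ≤ 1

namespace SCFG

variable {m k : ℕ} {ρ : Type} [Fintype ρ] (G : SCFG m k ρ)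

/-- The leftmost rewriting relation: `s` rewrites to `s'` by applying rule `π` to the
leftmost nonterminal of `s`. -/
def LeftmostStep (s : List (Fin m ⊕ Fin k)) (π : ρ) (s' : List (Fin m ⊕ Fin k)) : Prop :=
  ∃ (u : List (Fin k)) (δ : List (Fin m ⊕ Fin k)),
    s = u.map Sum.inr ++ Sum.inl (G.prem π) :: δ ∧
    s' = u.map Sum.inr ++ G.rhs π ++ δ

/-- `StepSeq s l s'`: applying the rules of the list `l` in turn, each rewriting the
leftmost nonterminal, transforms the sentential form `s` into `s'`. -/
inductive StepSeq : List (Fin m ⊕ Fin k) → List ρ → List (Fin m ⊕ Fin k) → Prop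
  | nil (s : List (Fin m ⊕ Fin k)) : StepSeq s [] s
  | cons {s s' s'' : List (Fin m ⊕ Fin k)} {π : ρ} {l : List ρ} :
      G.LeftmostStep s π s' → StepSeq s' l s'' → StepSeq s (π :: l) s''

/-- A sentential form consisting only of terminals. -/
def IsTerminalString (s : List (Fin m ⊕ Fin k)) : Prop :=
  ∃ u : List (Fin k), s = u.map Sum.inr

/-- `CompleteDeriv i l`: the rule list `l` is a complete leftmost derivation starting
at the nonterminal `i` and ending in a terminal string. -/
def CompleteDeriv (i : Fin m) (l : List ρ) : Prop :=
  ∃ s, G.StepSeq [Sum.inl i] l s ∧ IsTerminalString s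

/-- The probability of a derivation: the product of the probabilities of its rules. -/
def weight (l : List ρ) : ℝ := (l.map G.p).prod

/-- `G` is proper: for each nonterminal, the weights of the rules with that premise
sum to `1`. -/
def Proper : Prop :=
  ∀ i : Fin m, ∑ π ∈ Finset.univ.filter (fun π => G.prem π = i), G.p π = 1

/-- A nonterminal is productive if some complete leftmost derivation starts at it. -/
def Productive (i : Fin m) : Prop := ∃ l, G.CompleteDeriv i l

/-- A nonterminal is accessible if some leftmost derivation sequence from the start
symbol produces a sentential form containing it. -/
def Accessible [NeZero m] (i : Fin m) : Prop :=
  ∃ l s, G.StepSeq [Sum.inl (0 : Fin m)] l s ∧ Sum.inl i ∈ s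

/-- The expectation matrix `M i n = ∑_j p(Aᵢ → B_{i,j}) · r_n(i,j)`, where `r_n(i,j)`
is the number of occurrences of the nonterminal `n` in the right-hand side of the
`j`-th rule with premise `i`. -/
noncomputable def expectationMatrix : Matrix (Fin m) (Fin m) ℝ :=
  fun i n => ∑ π ∈ Finset.univ.filter (fun π => G.prem π = i),
    G.p π * ((G.rhs π).count (Sum.inl n) : ℝ)

end SCFG

set_option linter.unusedSectionVars false
set_option maxHeartbeats 1000000

namespace BT
variable {m k : ℕ}

/-- find the leftmost nonterminal: returns (terminal prefix, nonterminal, rest) -/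
def firstSplit : List (Fin m ⊕ Fin k) → Option (List (Fin k) × Fin m × List (Fin m ⊕ Fin k))
  | [] => none
  | Sum.inl a :: t => some ([], a, t)
  | Sum.inr x :: t => (firstSplit t).map fun w => (x :: w.1, w.2)

theorem firstSplit_map_inr (u : List (Fin k)) :
    firstSplit (u.map Sum.inr : List (Fin m ⊕ Fin k)) = none := by
  induction u with
  | nil => rfl
  | cons x t ih => simp [firstSplit, ih]

theorem firstSplit_eq_some_iff {s : List (Fin m ⊕ Fin k)} {u : List (Fin k)} {a : Fin m}
    {δ : List (Fin m ⊕ Fin k)} :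
    firstSplit s = some (u, a, δ) ↔ s = u.map Sum.inr ++ Sum.inl a :: δ := by
  constructor
  · intro h
    induction s generalizing u with
    | nil => simp [firstSplit] at h
    | cons x t ih =>
      cases x with
      | inl b => simp [firstSplit] at h; obtain ⟨h1, h2, h3⟩ := h; subst h1 h2 h3; simp
      | inr y =>
        rw [firstSplit, Option.map_eq_some_iff] at h
        obtain ⟨⟨u', a', δ'⟩, h1, h2⟩ := h
        obtain ⟨rfl, rfl, rfl⟩ : u = y :: u' ∧ a = a' ∧ δ = δ' := by
          simpa [Prod.ext_iff, eq_comm] using h2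
        simp [ih h1]
  · rintro rfl
    induction u with
    | nil => rfl
    | cons x t ih => simp [firstSplit, ih]

theorem firstSplit_eq_none_iff {s : List (Fin m ⊕ Fin k)} :
    firstSplit s = none ↔ ∃ u : List (Fin k), s = u.map Sum.inr := by
  constructor
  · intro h
    induction s with
    | nil => exact ⟨[], rfl⟩
    | cons x t ih =>
      cases x with
      | inl b => simp [firstSplit] at h
      | inr y =>
        simp [firstSplit] at h
        obtain ⟨u, rfl⟩ := ih h
        exact ⟨y :: u, rfl⟩
  · rintro ⟨u, rfl⟩; exact firstSplit_map_inr u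


variable {ρ : Type} [Fintype ρ]

theorem leftmostStep_iff (G : SCFG m k ρ) {s : List (Fin m ⊕ Fin k)} {u : List (Fin k)}
    {a : Fin m} {δ : List (Fin m ⊕ Fin k)} (h : firstSplit s = some (u, a, δ)) (π : ρ)
    (s' : List (Fin m ⊕ Fin k)) :
    G.LeftmostStep s π s' ↔ G.prem π = a ∧ s' = u.map Sum.inr ++ G.rhs π ++ δ := by
  constructor
  · rintro ⟨u', δ', rfl, rfl⟩
    rw [firstSplit_eq_some_iff.mpr rfl] at h
    obtain ⟨rfl, rfl, rfl⟩ : u = u' ∧ a = G.prem π ∧ δ = δ' := by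
      simpa [Prod.ext_iff, eq_comm] using h
    exact ⟨rfl, rfl⟩
  · rintro ⟨h1, rfl⟩
    exact ⟨u, δ, by rw [h1, ← firstSplit_eq_some_iff.mp h], rfl⟩

theorem not_leftmostStep (G : SCFG m k ρ) {s : List (Fin m ⊕ Fin k)}
    (h : firstSplit s = none) (π : ρ) (s' : List (Fin m ⊕ Fin k)) :
    ¬ G.LeftmostStep s π s' := by
  rintro ⟨u', δ', rfl, rfl⟩
  rw [firstSplit_eq_some_iff.mpr rfl] at h
  exact Option.some_ne_none _ h

theorem stepSeq_nil_iff (G : SCFG m k ρ) {s t : List (Fin m ⊕ Fin k)} :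
    G.StepSeq s [] t ↔ t = s := by
  constructor
  · intro h; cases h; rfl
  · rintro rfl; exact SCFG.StepSeq.nil _

theorem stepSeq_cons_iff (G : SCFG m k ρ) {s t : List (Fin m ⊕ Fin k)} {π : ρ} {l : List ρ} :
    G.StepSeq s (π :: l) t ↔ ∃ s', G.LeftmostStep s π s' ∧ G.StepSeq s' l t := by
  constructor
  · intro h; cases h with | cons h1 h2 => exact ⟨_, h1, h2⟩
  · rintro ⟨s', h1, h2⟩; exact SCFG.StepSeq.cons h1 h2

/-- the set of rules with premise `a` -/
def rules (G : SCFG m k ρ) (a : Fin m) : Finset ρ :=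
  Finset.univ.filter fun π => G.prem π = a

def derivs (G : SCFG m k ρ) [DecidableEq ρ] : ℕ → List (Fin m ⊕ Fin k) → Finset (List ρ)
  | 0, s => if firstSplit s = none then {[]} else ∅
  | N+1, s =>
    match firstSplit s with
    | none => {[]}
    | some (u, a, δ) =>
      Finset.univ.biUnion fun π =>
        if G.prem π = a then ((derivs G N (u.map Sum.inr ++ G.rhs π ++ δ)).image (π :: ·)) else ∅

variable (G : SCFG m k ρ) [DecidableEq ρ]

theorem derivs_zero_none {s : List (Fin m ⊕ Fin k)} (h : firstSplit s = none) :
    derivs G 0 s = {[]} := by simp [derivs, h]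

theorem derivs_zero_some {s : List (Fin m ⊕ Fin k)} {w} (h : firstSplit s = some w) :
    derivs G 0 s = ∅ := by simp [derivs, h]

theorem derivs_succ_none {N : ℕ} {s : List (Fin m ⊕ Fin k)} (h : firstSplit s = none) :
    derivs G (N+1) s = {[]} := by rw [derivs, h]

theorem derivs_succ_some {N : ℕ} {s : List (Fin m ⊕ Fin k)} {u a δ}
    (h : firstSplit s = some (u, a, δ)) :
    derivs G (N+1) s = Finset.univ.biUnion fun π =>
      if G.prem π = a then ((derivs G N (u.map Sum.inr ++ G.rhs π ++ δ)).image (π :: ·))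
      else ∅ := by rw [derivs, h]

theorem mem_derivs {N : ℕ} {s : List (Fin m ⊕ Fin k)} {l : List ρ} :
    l ∈ derivs G N s ↔ (∃ t, G.StepSeq s l t ∧ SCFG.IsTerminalString t) ∧ l.length ≤ N := by
  induction N generalizing s l with
  | zero =>
    rcases h : firstSplit s with _ | ⟨u, a, δ⟩
    · rw [derivs_zero_none G h]
      simp only [Finset.mem_singleton]
      constructor
      · rintro rfl
        exact ⟨⟨s, (stepSeq_nil_iff G).mpr rfl, firstSplit_eq_none_iff.mp h⟩, by simp⟩
      · rintro ⟨-, hlen⟩; exact List.length_eq_zero_iff.mp (Nat.le_zero.mp hlen)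
    · rw [derivs_zero_some G h]
      simp only [Finset.notMem_empty, false_iff]
      rintro ⟨⟨t, hst, ht⟩, hlen⟩
      obtain rfl := List.length_eq_zero_iff.mp (Nat.le_zero.mp hlen)
      obtain rfl := (stepSeq_nil_iff G).mp hst
      rw [firstSplit_eq_none_iff.mpr ht] at h
      exact nomatch h
  | succ N ih =>
    rcases h : firstSplit s with _ | ⟨u, a, δ⟩
    · rw [derivs_succ_none G h]
      simp only [Finset.mem_singleton]
      constructor
      · rintro rfl
        exact ⟨⟨s, (stepSeq_nil_iff G).mpr rfl, firstSplit_eq_none_iff.mp h⟩, by simp⟩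
      · rintro ⟨⟨t, hst, ht⟩, -⟩
        cases hst with
        | nil => rfl
        | cons h1 _ => exact absurd h1 (not_leftmostStep G h _ _)
    · rw [derivs_succ_some G h]
      simp only [Finset.mem_biUnion, Finset.mem_univ, true_and]
      constructor
      · rintro ⟨π, hπ⟩
        rw [apply_ite (l ∈ ·)] at hπ
        split_ifs at hπ with hprem
        · simp only [Finset.mem_image] at hπ
          obtain ⟨l', hl', rfl⟩ := hπ
          obtain ⟨⟨t, hst, ht⟩, hlen⟩ := ih.mp hl'
          refine ⟨⟨t, ?_, ht⟩, by simpa using hlen⟩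
          exact SCFG.StepSeq.cons ((leftmostStep_iff G h π _).mpr ⟨hprem, rfl⟩) hst
        · exact absurd hπ (Finset.notMem_empty l)
      · rintro ⟨⟨t, hst, ht⟩, hlen⟩
        cases hst with
        | nil =>
          rw [firstSplit_eq_none_iff.mpr ht] at h
          exact nomatch h
        | @cons _ s' _ π l' h1 h2 =>
          obtain ⟨hprem, rfl⟩ := (leftmostStep_iff G h π _).mp h1
          refine ⟨π, ?_⟩
          rw [if_pos hprem]
          exact Finset.mem_image_of_mem _ (ih.mpr ⟨⟨t, h2, ht⟩, by simpa using hlen⟩)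
theorem weight_nil : G.weight ([] : List ρ) = 1 := by simp [SCFG.weight]

theorem weight_cons (π : ρ) (l : List ρ) : G.weight (π :: l) = G.p π * G.weight l := by
  simp [SCFG.weight]

theorem weight_nonneg (l : List ρ) : 0 ≤ G.weight l := by
  induction l with
  | nil => rw [weight_nil]; norm_num
  | cons π l ih => rw [weight_cons]; exact mul_nonneg (G.p_nonneg π) ih

/-- sum of the weights of all complete derivations from `s` of length at most `N` -/
noncomputable def aSum (N : ℕ) (s : List (Fin m ⊕ Fin k)) : ℝ :=
  ∑ l ∈ derivs G N s, G.weight l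

theorem aSum_nonneg (N : ℕ) (s : List (Fin m ⊕ Fin k)) : 0 ≤ aSum G N s :=
  Finset.sum_nonneg fun l _ => weight_nonneg G l

theorem aSum_zero_none {s : List (Fin m ⊕ Fin k)} (h : firstSplit s = none) :
    aSum G 0 s = 1 := by
  rw [aSum, derivs_zero_none G h, Finset.sum_singleton, weight_nil]

theorem aSum_zero_some {s : List (Fin m ⊕ Fin k)} {w} (h : firstSplit s = some w) :
    aSum G 0 s = 0 := by
  rw [aSum, derivs_zero_some G h, Finset.sum_empty]

theorem aSum_succ_none {N : ℕ} {s : List (Fin m ⊕ Fin k)} (h : firstSplit s = none) :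
    aSum G (N+1) s = 1 := by
  rw [aSum, derivs_succ_none G h, Finset.sum_singleton, weight_nil]

theorem aSum_succ_some {N : ℕ} {s : List (Fin m ⊕ Fin k)} {u a δ}
    (h : firstSplit s = some (u, a, δ)) :
    aSum G (N+1) s = ∑ π ∈ rules G a, G.p π * aSum G N (u.map Sum.inr ++ G.rhs π ++ δ) := by
  rw [aSum, derivs_succ_some G h, Finset.sum_biUnion]
  · have key : ∀ π : ρ,
        (∑ l ∈ (if G.prem π = a then
            ((derivs G N (u.map Sum.inr ++ G.rhs π ++ δ)).image (π :: ·)) else ∅), G.weight l)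
        = if G.prem π = a then G.p π * aSum G N (u.map Sum.inr ++ G.rhs π ++ δ) else 0 := by
      intro π
      split_ifs with hprem
      · rw [Finset.sum_image (fun x _ y _ h => by injection h), aSum, Finset.mul_sum]
        exact Finset.sum_congr rfl fun l _ => weight_cons G π l
      · rw [Finset.sum_empty]
    rw [Finset.sum_congr rfl fun π _ => key π, rules, Finset.sum_filter]
  · intro π _ π' _ hne
    refine Finset.disjoint_left.mpr fun l hl hl' => ?_
    dsimp only at hl hl'
    split_ifs at hl hl' <;>
      simp only [Finset.mem_image, Finset.notMem_empty] at hl hl'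
    obtain ⟨l1, -, rfl⟩ := hl
    obtain ⟨l2, -, h2⟩ := hl'
    exact hne (by injection h2 with h3 _; exact h3.symm)

/-- mass of surviving (non-terminated) derivations after `N` steps whose current leftmost
nonterminal is `b` -/
noncomputable def ell : ℕ → List (Fin m ⊕ Fin k) → Fin m → ℝ
  | 0, s, b =>
    match firstSplit s with
    | none => 0
    | some (_, a, _) => if a = b then 1 else 0
  | N+1, s, b =>
    match firstSplit s with
    | none => 0
    | some (u, a, δ) => ∑ π ∈ rules G a, G.p π * ell N (u.map Sum.inr ++ G.rhs π ++ δ) b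

theorem ell_zero_none {s : List (Fin m ⊕ Fin k)} (h : firstSplit s = none) (b : Fin m) :
    ell G 0 s b = 0 := by rw [ell, h]

theorem ell_zero_some {s : List (Fin m ⊕ Fin k)} {u a δ} (h : firstSplit s = some (u, a, δ))
    (b : Fin m) : ell G 0 s b = if a = b then 1 else 0 := by rw [ell, h]

theorem ell_succ_none {N : ℕ} {s : List (Fin m ⊕ Fin k)} (h : firstSplit s = none) (b : Fin m) :
    ell G (N+1) s b = 0 := by rw [ell, h]

theorem ell_succ_some {N : ℕ} {s : List (Fin m ⊕ Fin k)} {u a δ}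
    (h : firstSplit s = some (u, a, δ)) (b : Fin m) :
    ell G (N+1) s b = ∑ π ∈ rules G a, G.p π * ell G N (u.map Sum.inr ++ G.rhs π ++ δ) b := by
  rw [ell, h]

theorem ell_nonneg (N : ℕ) (s : List (Fin m ⊕ Fin k)) (b : Fin m) : 0 ≤ ell G N s b := by
  induction N generalizing s with
  | zero =>
    rcases h : firstSplit s with _ | ⟨u, a, δ⟩
    · rw [ell_zero_none G h]
    · rw [ell_zero_some G h]; positivity
  | succ N ih =>
    rcases h : firstSplit s with _ | ⟨u, a, δ⟩
    · rw [ell_succ_none G h]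
    · rw [ell_succ_some G h]
      exact Finset.sum_nonneg fun π _ => mul_nonneg (G.p_nonneg π) (ih _)

/-- total surviving mass after `N` steps -/
noncomputable def bSum (N : ℕ) (s : List (Fin m ⊕ Fin k)) : ℝ := ∑ b : Fin m, ell G N s b

theorem bSum_nonneg (N : ℕ) (s : List (Fin m ⊕ Fin k)) : 0 ≤ bSum G N s :=
  Finset.sum_nonneg fun b _ => ell_nonneg G N s b

theorem bSum_zero_none {s : List (Fin m ⊕ Fin k)} (h : firstSplit s = none) :
    bSum G 0 s = 0 := by
  rw [bSum]; simp [ell_zero_none G h]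

theorem bSum_zero_some {s : List (Fin m ⊕ Fin k)} {u a δ} (h : firstSplit s = some (u, a, δ)) :
    bSum G 0 s = 1 := by
  rw [bSum]
  simp [ell_zero_some G h]

theorem bSum_succ_none {N : ℕ} {s : List (Fin m ⊕ Fin k)} (h : firstSplit s = none) :
    bSum G (N+1) s = 0 := by
  rw [bSum]; simp [ell_succ_none G h]

theorem bSum_succ_some {N : ℕ} {s : List (Fin m ⊕ Fin k)} {u a δ}
    (h : firstSplit s = some (u, a, δ)) :
    bSum G (N+1) s = ∑ π ∈ rules G a, G.p π * bSum G N (u.map Sum.inr ++ G.rhs π ++ δ) := by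
  rw [bSum]
  simp only [ell_succ_some G h]
  rw [Finset.sum_comm]
  exact Finset.sum_congr rfl fun π _ => by rw [bSum, Finset.mul_sum]

theorem aSum_add_bSum (hp : G.Proper) (N : ℕ) (s : List (Fin m ⊕ Fin k)) :
    aSum G N s + bSum G N s = 1 := by
  induction N generalizing s with
  | zero =>
    rcases h : firstSplit s with _ | ⟨u, a, δ⟩
    · rw [aSum_zero_none G h, bSum_zero_none G h]; norm_num
    · rw [aSum_zero_some G h, bSum_zero_some G h]; norm_num
  | succ N ih =>
    rcases h : firstSplit s with _ | ⟨u, a, δ⟩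
    · rw [aSum_succ_none G h, bSum_succ_none G h]; norm_num
    · rw [aSum_succ_some G h, bSum_succ_some G h, ← Finset.sum_add_distrib]
      have : ∀ π ∈ rules G a, G.p π * aSum G N (u.map Sum.inr ++ G.rhs π ++ δ) +
          G.p π * bSum G N (u.map Sum.inr ++ G.rhs π ++ δ) = G.p π := by
        intro π _
        rw [← mul_add, ih, mul_one]
      rw [Finset.sum_congr rfl this]
      exact hp a

theorem bSum_le_one (hp : G.Proper) (N : ℕ) (s : List (Fin m ⊕ Fin k)) : bSum G N s ≤ 1 := by
  have := aSum_add_bSum G hp N s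
  have h2 := aSum_nonneg G N s
  linarith

theorem aSum_le_one (hp : G.Proper) (N : ℕ) (s : List (Fin m ⊕ Fin k)) : aSum G N s ≤ 1 := by
  have := aSum_add_bSum G hp N s
  have h2 := bSum_nonneg G N s
  linarith

theorem bSum_succ_le (hp : G.Proper) (N : ℕ) (s : List (Fin m ⊕ Fin k)) :
    bSum G (N+1) s ≤ bSum G N s := by
  induction N generalizing s with
  | zero =>
    rcases h : firstSplit s with _ | ⟨u, a, δ⟩
    · rw [bSum_succ_none G h, bSum_zero_none G h]
    · rw [bSum_succ_some G h, bSum_zero_some G h]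
      calc ∑ π ∈ rules G a, G.p π * bSum G 0 (u.map Sum.inr ++ G.rhs π ++ δ)
          ≤ ∑ π ∈ rules G a, G.p π * 1 := Finset.sum_le_sum fun π _ =>
            mul_le_mul_of_nonneg_left (bSum_le_one G hp 0 _) (G.p_nonneg π)
        _ = 1 := by simp only [mul_one]; exact hp a
  | succ N ih =>
    rcases h : firstSplit s with _ | ⟨u, a, δ⟩
    · rw [bSum_succ_none G h, bSum_succ_none G h]
    · rw [bSum_succ_some G h, bSum_succ_some G h]
      exact Finset.sum_le_sum fun π _ => mul_le_mul_of_nonneg_left (ih _) (G.p_nonneg π)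

theorem bSum_antitone (hp : G.Proper) (s : List (Fin m ⊕ Fin k)) :
    Antitone fun N => bSum G N s :=
  antitone_nat_of_succ_le fun N => bSum_succ_le G hp N s

section BEqSum
variable {α β : Type*} [BEq α] [BEq β]
theorem beq_inl_inl (x y : α) : ((Sum.inl x : α ⊕ β) == Sum.inl y) = (x == y) := rfl
theorem beq_inr_inr (x y : β) : ((Sum.inr x : α ⊕ β) == Sum.inr y) = (x == y) := rfl
theorem beq_inl_inr (x : α) (y : β) : ((Sum.inl x : α ⊕ β) == Sum.inr y) = false := rfl
theorem beq_inr_inl (x : β) (y : α) : ((Sum.inr x : α ⊕ β) == Sum.inl y) = false := rfl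
instance [LawfulBEq α] [LawfulBEq β] : LawfulBEq (α ⊕ β) where
  eq_of_beq {a b} h := by
    cases a <;> cases b <;>
      simp_all [beq_inl_inl, beq_inr_inr, beq_inl_inr, beq_inr_inl]
  rfl {a} := by cases a <;> simp [beq_inl_inl, beq_inr_inr]
end BEqSum


theorem count_map_inr (u : List (Fin k)) (n : Fin m) :
    (u.map Sum.inr : List (Fin m ⊕ Fin k)).count (Sum.inl n) = 0 := by
  apply List.count_eq_zero_of_not_mem
  intro hmem
  obtain ⟨x, -, hx⟩ := List.mem_map.mp hmem
  exact nomatch hx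

/-- expected number of occurrences of nonterminal `n` in the sentential form after `N`
surviving steps -/
noncomputable def cF : ℕ → List (Fin m ⊕ Fin k) → Fin m → ℝ
  | 0, s, n => (s.count (Sum.inl n) : ℝ)
  | N+1, s, n =>
    match firstSplit s with
    | none => 0
    | some (u, a, δ) => ∑ π ∈ rules G a, G.p π * cF N (u.map Sum.inr ++ G.rhs π ++ δ) n

theorem cF_zero (s : List (Fin m ⊕ Fin k)) (n : Fin m) :
    cF G 0 s n = (s.count (Sum.inl n) : ℝ) := by rw [cF]

theorem cF_succ_none {N : ℕ} {s : List (Fin m ⊕ Fin k)} (h : firstSplit s = none) (n : Fin m) :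
    cF G (N+1) s n = 0 := by rw [cF, h]

theorem cF_succ_some {N : ℕ} {s : List (Fin m ⊕ Fin k)} {u a δ}
    (h : firstSplit s = some (u, a, δ)) (n : Fin m) :
    cF G (N+1) s n = ∑ π ∈ rules G a, G.p π * cF G N (u.map Sum.inr ++ G.rhs π ++ δ) n := by
  rw [cF, h]

theorem cF_nonneg (N : ℕ) (s : List (Fin m ⊕ Fin k)) (n : Fin m) : 0 ≤ cF G N s n := by
  induction N generalizing s with
  | zero => rw [cF_zero]; positivity
  | succ N ih =>
    rcases h : firstSplit s with _ | ⟨u, a, δ⟩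
    · rw [cF_succ_none G h]
    · rw [cF_succ_some G h]
      exact Finset.sum_nonneg fun π _ => mul_nonneg (G.p_nonneg π) (ih _)

theorem cF_succ (hp : G.Proper) (N : ℕ) (s : List (Fin m ⊕ Fin k)) (n : Fin m) :
    cF G (N+1) s n = cF G N s n +
      ∑ a, ell G N s a * (G.expectationMatrix a n - if a = n then 1 else 0) := by
  induction N generalizing s with
  | zero =>
    rcases h : firstSplit s with _ | ⟨u, a, δ⟩
    · rw [cF_succ_none G h, cF_zero]
      obtain ⟨u, rfl⟩ := firstSplit_eq_none_iff.mp h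
      simp [count_map_inr, ell_zero_none G h]
    · rw [cF_succ_some G h, cF_zero]
      have hs : s = u.map Sum.inr ++ Sum.inl a :: δ := firstSplit_eq_some_iff.mp h
      have hcount : (s.count (Sum.inl n) : ℝ) =
          (if a = n then 1 else 0) + (δ.count (Sum.inl n) : ℝ) := by
        subst hs
        rw [List.count_append, count_map_inr, List.count_cons]
        simp only [beq_iff_eq, Sum.inl.injEq]
        by_cases hb : a = n
        · rw [if_pos hb, if_pos hb]; push_cast; ring
        · rw [if_neg hb, if_neg hb]; push_cast; ring
      have hnext : ∀ π : ρ, (((u.map Sum.inr ++ G.rhs π ++ δ).count (Sum.inl n) : ℕ) : ℝ) =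
          ((G.rhs π).count (Sum.inl n) : ℝ) + (δ.count (Sum.inl n) : ℝ) := by
        intro π
        rw [List.count_append, List.count_append, count_map_inr]
        push_cast
        ring
      have hM : G.expectationMatrix a n =
          ∑ π ∈ rules G a, G.p π * ((G.rhs π).count (Sum.inl n) : ℝ) := rfl
      have hone : ∑ π ∈ rules G a, G.p π = 1 := hp a
      have hell : ∀ b, ell G 0 s b = if a = b then 1 else 0 := ell_zero_some G h
      simp only [cF_zero, hnext, hell]
      rw [Finset.sum_congr rfl fun π _ =>
        (mul_add (G.p π) ((G.rhs π).count (Sum.inl n) : ℝ) (δ.count (Sum.inl n) : ℝ)),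
        Finset.sum_add_distrib, ← Finset.sum_mul, hone, hcount, ← hM]
      have hsum : ∑ b, (if a = b then (1:ℝ) else 0) *
          (G.expectationMatrix b n - if b = n then 1 else 0)
          = G.expectationMatrix a n - if a = n then 1 else 0 := by
        rw [Finset.sum_eq_single a]
        · rw [if_pos rfl, one_mul]
        · intro b _ hb
          rw [if_neg fun h' : a = b => hb h'.symm, zero_mul]
        · intro hmem; exact absurd (Finset.mem_univ a) hmem
      rw [hsum]
      ring
  | succ N ih =>
    rcases h : firstSplit s with _ | ⟨u, a, δ⟩
    · rw [cF_succ_none G h, cF_succ_none G h]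
      simp [ell_succ_none G h]
    · rw [cF_succ_some G h, cF_succ_some G h]
      simp only [ih]
      rw [Finset.sum_congr rfl fun π (_ : π ∈ rules G a) => mul_add (G.p π) _ _,
        Finset.sum_add_distrib]
      congr 1
      have key : ∀ b : Fin m,
          ell G (N+1) s b * (G.expectationMatrix b n - if b = n then 1 else 0)
          = ∑ π ∈ rules G a, G.p π * (ell G N (u.map Sum.inr ++ G.rhs π ++ δ) b *
              (G.expectationMatrix b n - if b = n then 1 else 0)) := by
        intro b
        rw [ell_succ_some G h b, Finset.sum_mul]
        exact Finset.sum_congr rfl fun π _ => by ring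
      rw [Finset.sum_congr rfl fun b (_ : b ∈ (Finset.univ : Finset (Fin m))) => key b,
        Finset.sum_comm]
      exact Finset.sum_congr rfl fun π _ => by rw [Finset.mul_sum]

theorem cF_telescope (hp : G.Proper) (N : ℕ) (s : List (Fin m ⊕ Fin k)) (n : Fin m) :
    cF G N s n + ∑ a, (∑ j ∈ Finset.range N, ell G j s a) *
      ((if a = n then (1:ℝ) else 0) - G.expectationMatrix a n) = (s.count (Sum.inl n) : ℝ) := by
  induction N with
  | zero => simp [cF_zero]
  | succ N ih =>
    rw [cF_succ G hp N s n]
    simp only [Finset.sum_range_succ]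
    have h2 : ∑ a, ((∑ j ∈ Finset.range N, ell G j s a) + ell G N s a) *
        ((if a = n then (1:ℝ) else 0) - G.expectationMatrix a n)
        = ∑ a, (∑ j ∈ Finset.range N, ell G j s a) *
            ((if a = n then (1:ℝ) else 0) - G.expectationMatrix a n)
          + ∑ a, ell G N s a * ((if a = n then (1:ℝ) else 0) - G.expectationMatrix a n) := by
      rw [← Finset.sum_add_distrib]
      exact Finset.sum_congr rfl fun a _ => by ring
    have h3 : ∑ a, ell G N s a * (G.expectationMatrix a n - if a = n then 1 else 0)
        = - ∑ a, ell G N s a * ((if a = n then (1:ℝ) else 0) - G.expectationMatrix a n) := by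
      rw [← Finset.sum_neg_distrib]
      exact Finset.sum_congr rfl fun a _ => by ring
    rw [h2, h3]
    linarith

end BT


open Topology Filter

namespace BTMat

attribute [local instance] Matrix.linftyOpNormedRing Matrix.linftyOpNormedAlgebra

variable {d : ℕ}

theorem entry_norm_le {α : Type*} [NormedRing α] (B : Matrix (Fin d) (Fin d) α) (a b : Fin d) :
    ‖B a b‖ ≤ ‖B‖ := by
  rw [Matrix.linfty_opNorm_def]
  have h1 : ‖B a b‖₊ ≤ ∑ j, ‖B a j‖₊ :=
    Finset.single_le_sum (f := fun j => ‖B a j‖₊) (fun j _ => zero_le) (Finset.mem_univ b)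
  have h2 : (∑ j, ‖B a j‖₊) ≤ Finset.univ.sup (fun i => ∑ j, ‖B i j‖₊) :=
    Finset.le_sup (f := fun i => ∑ j, ‖B i j‖₊) (Finset.mem_univ a)
  exact_mod_cast h1.trans h2

theorem norm_le_sum_entries {α : Type*} [NormedRing α] (B : Matrix (Fin d) (Fin d) α) :
    ‖B‖ ≤ ∑ a, ∑ b, ‖B a b‖ := by
  rw [Matrix.linfty_opNorm_def]
  have : Finset.univ.sup (fun i => ∑ j, ‖B i j‖₊) ≤ ∑ a, ∑ b, ‖B a b‖₊ :=
    Finset.sup_le fun i _ =>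
      Finset.single_le_sum (f := fun a => ∑ b, ‖B a b‖₊) (fun a _ => zero_le)
        (Finset.mem_univ i)
  calc ((Finset.univ.sup fun i => ∑ j, ‖B i j‖₊ : NNReal) : ℝ)
      ≤ ((∑ a, ∑ b, ‖B a b‖₊ : NNReal) : ℝ) := by exact_mod_cast this
    _ = ∑ a, ∑ b, ‖B a b‖ := by push_cast; rfl

theorem pow_entry_nonneg (M : Matrix (Fin d) (Fin d) ℝ) (hM : ∀ a b, 0 ≤ M a b) (n : ℕ) :
    ∀ a b, 0 ≤ (M ^ n) a b := by
  induction n with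
  | zero =>
    intro a b
    rw [pow_zero, Matrix.one_apply]
    split_ifs <;> norm_num
  | succ n ih =>
    intro a b
    rw [pow_succ, Matrix.mul_apply]
    exact Finset.sum_nonneg fun c _ => mul_nonneg (ih a c) (hM c b)

theorem exists_nonneg_inverse [NeZero d] (M : Matrix (Fin d) (Fin d) ℝ)
    (hM : ∀ a b, 0 ≤ M a b)
    (hρ : spectralRadius ℂ (M.map Complex.ofReal) < 1) :
    ∃ K : Matrix (Fin d) (Fin d) ℝ, (∀ a b, 0 ≤ K a b) ∧ (1 - M) * K = 1 := by
  have : Nonempty (Fin d) := ⟨⟨0, Nat.pos_of_ne_zero (NeZero.ne d)⟩⟩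
  set A : Matrix (Fin d) (Fin d) ℂ := M.map Complex.ofReal with hA
  have hpowA : ∀ n : ℕ, A ^ n = (M ^ n).map Complex.ofReal := by
    intro n
    have h1 : A = Complex.ofRealHom.mapMatrix M := rfl
    have h2 : ∀ B : Matrix (Fin d) (Fin d) ℝ,
        Complex.ofRealHom.mapMatrix B = B.map Complex.ofReal := fun _ => rfl
    rw [h1, ← map_pow, h2]
  -- Gelfand
  have hg := spectrum.pow_norm_pow_one_div_tendsto_nhds_spectralRadius A
  have hne : spectralRadius ℂ A ≠ ⊤ := ne_top_of_lt hρ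
  have htoReal : (spectralRadius ℂ A).toReal < 1 := by
    rw [← ENNReal.toReal_one]
    exact ENNReal.toReal_strict_mono ENNReal.one_ne_top hρ
  set t : ℝ := (spectralRadius ℂ A).toReal with ht
  set r : ℝ := (t + 1) / 2 with hr
  have htr : t < r := by rw [hr]; linarith
  have hr1 : r < 1 := by rw [hr]; linarith
  have hr0 : 0 ≤ r := by
    have : 0 ≤ t := ENNReal.toReal_nonneg
    rw [hr]; linarith
  have hgr : Filter.Tendsto (fun n : ℕ => ‖A ^ n‖ ^ (1 / (n:ℝ))) Filter.atTop (𝓝 t) := by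
    have h5 := (ENNReal.tendsto_toReal hne).comp hg
    refine h5.congr fun n => ?_
    exact ENNReal.toReal_ofReal (Real.rpow_nonneg (norm_nonneg _) _)
  have hev : ∀ᶠ n : ℕ in Filter.atTop, ‖A ^ n‖ ^ (1 / (n:ℝ)) < r :=
    hgr.eventually_lt_const htr
  obtain ⟨N₀, hN₀⟩ := hev.exists_forall_of_atTop
  have hAn : ∀ n, N₀ + 1 ≤ n → ‖A ^ n‖ ≤ r ^ n := by
    intro n hn
    have hn0 : (n : ℝ) ≠ 0 := Nat.cast_ne_zero.mpr (by omega)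
    have h3 := hN₀ n (by omega)
    have h4 : (‖A ^ n‖ ^ (1 / (n:ℝ))) ^ (n : ℝ) ≤ r ^ (n:ℝ) :=
      Real.rpow_le_rpow (Real.rpow_nonneg (norm_nonneg _) _) h3.le (Nat.cast_nonneg n)
    rw [← Real.rpow_natCast r n]
    rw [← Real.rpow_mul (norm_nonneg _), one_div, inv_mul_cancel₀ hn0,
      Real.rpow_one] at h4
    exact h4
  -- entry bounds for M ^ n
  have hMn_entry : ∀ (n : ℕ) (a b : Fin d), |(M ^ n) a b| ≤ ‖A ^ n‖ := by
    intro n a b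
    have : ((M ^ n) a b : ℂ) = (A ^ n) a b := by rw [hpowA n]; rfl
    calc |(M ^ n) a b| = ‖((M ^ n) a b : ℂ)‖ := by simp
      _ = ‖(A ^ n) a b‖ := by rw [this]
      _ ≤ ‖A ^ n‖ := entry_norm_le _ a b
  -- summability of powers of M
  have hnormMn : ∀ n, N₀ + 1 ≤ n → ‖M ^ n‖ ≤ (d * d : ℝ) * r ^ n := by
    intro n hn
    calc ‖M ^ n‖ ≤ ∑ a, ∑ b, ‖(M ^ n) a b‖ := norm_le_sum_entries _
      _ ≤ ∑ _a : Fin d, ∑ _b : Fin d, r ^ n := by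
        refine Finset.sum_le_sum fun a _ => Finset.sum_le_sum fun b _ => ?_
        exact le_trans (hMn_entry n a b) (hAn n hn)
      _ = (d * d : ℝ) * r ^ n := by
        simp [Finset.sum_const, Finset.card_univ]
        ring
  have hsum : Summable (fun n : ℕ => M ^ n) := by
    refine Summable.of_norm_bounded_eventually (g := fun n => (d * d : ℝ) * r ^ n)
      ((summable_geometric_of_lt_one hr0 hr1).mul_left _) ?_
    rw [Nat.cofinite_eq_atTop]
    filter_upwards [Filter.eventually_ge_atTop (N₀ + 1)] with n hn
    exact hnormMn n hn
  set K : Matrix (Fin d) (Fin d) ℝ := ∑' n : ℕ, M ^ n with hK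
  have hKsum : HasSum (fun n : ℕ => M ^ n) K := hsum.hasSum
  have htendS : Filter.Tendsto (fun N => ∑ n ∈ Finset.range N, M ^ n)
      Filter.atTop (𝓝 K) := hKsum.tendsto_sum_nat
  have hpow0 : Filter.Tendsto (fun n : ℕ => M ^ n) Filter.atTop (𝓝 0) :=
    hsum.tendsto_atTop_zero
  have hgeo : ∀ N : ℕ, (1 - M) * (∑ n ∈ Finset.range N, M ^ n) = 1 - M ^ N := by
    intro N
    induction N with
    | zero => simp
    | succ N ih =>
      rw [Finset.sum_range_succ, mul_add, ih, sub_mul, one_mul, pow_succ']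
      abel
  have hmul : (1 - M) * K = 1 := by
    have h1 : Filter.Tendsto (fun N => (1 - M) * ∑ n ∈ Finset.range N, M ^ n)
        Filter.atTop (𝓝 ((1 - M) * K)) := htendS.const_mul _
    have h2 : Filter.Tendsto (fun N : ℕ => 1 - M ^ N) Filter.atTop (𝓝 (1 - 0)) :=
      tendsto_const_nhds.sub hpow0
    rw [sub_zero] at h2
    simp only [hgeo] at h1
    exact tendsto_nhds_unique h1 h2
  refine ⟨K, ?_, hmul⟩
  intro a b
  have hTend : Filter.Tendsto (fun N => (∑ n ∈ Finset.range N, M ^ n) a b)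
      Filter.atTop (𝓝 (K a b)) := by
    rw [tendsto_iff_dist_tendsto_zero]
    refine squeeze_zero (fun N => dist_nonneg) (fun N => ?_)
      (tendsto_iff_dist_tendsto_zero.mp htendS)
    rw [Real.dist_eq]
    calc |(∑ n ∈ Finset.range N, M ^ n) a b - K a b|
        = ‖((∑ n ∈ Finset.range N, M ^ n) - K) a b‖ := by rw [Matrix.sub_apply]; rfl
      _ ≤ ‖(∑ n ∈ Finset.range N, M ^ n) - K‖ := entry_norm_le _ a b
      _ = dist (∑ n ∈ Finset.range N, M ^ n) K := by rw [dist_eq_norm]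
  refine ge_of_tendsto' hTend fun N => ?_
  rw [Matrix.sum_apply]
  exact Finset.sum_nonneg fun n _ => pow_entry_nonneg M hM n a b

end BTMat

open Topology Filter BT



/-- **Consistency of a stochastic context-free grammar (Booth–Thompson)**: if a proper,
reduced SCFG (all rule probabilities positive, all nonterminals accessible and
productive) has expectation matrix of spectral radius `< 1` (as a complex matrix), then
the probabilities of all complete leftmost derivations from the start symbol sum
to `1`. -/

theorem scfg_consistent_of_spectralRadius_lt_one {m k : ℕ} [NeZero m] {ρ : Type}
    [Fintype ρ] (G : SCFG m k ρ)
    (hproper : G.Proper)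
    (hpos : ∀ π, 0 < G.p π)
    (huseful : ∀ i : Fin m, G.Accessible i ∧ G.Productive i)
    (hρ : spectralRadius ℂ (G.expectationMatrix.map Complex.ofReal) < 1) :
    HasSum (fun l : {l : List ρ // G.CompleteDeriv (0 : Fin m) l} => G.weight l.1) 1 := by
  classical
  set start : List (Fin m ⊕ Fin k) := [Sum.inl (0 : Fin m)] with hstart
  set M : Matrix (Fin m) (Fin m) ℝ := G.expectationMatrix with hMdef
  -- the nonnegative inverse of `1 - M`
  obtain ⟨K, hKnn, hKinv⟩ := BTMat.exists_nonneg_inverse M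
    (fun a b => Finset.sum_nonneg fun π _ => mul_nonneg (G.p_nonneg π) (Nat.cast_nonneg _)) hρ
  -- the cumulative survival masses are bounded
  set C : ℝ := ∑ a, ∑ b, (start.count (Sum.inl b) : ℝ) * K b a with hC
  have hbound : ∀ N : ℕ, ∑ j ∈ Finset.range N, bSum G j start ≤ C := by
    intro N
    set Λ : Fin m → ℝ := fun a => ∑ j ∈ Finset.range N, ell G j start a with hΛ
    have hswap : ∑ j ∈ Finset.range N, bSum G j start = ∑ a, Λ a := by
      simp only [bSum, hΛ]
      exact Finset.sum_comm
    have hvec : Matrix.vecMul Λ (1 - M) = fun n => (start.count (Sum.inl n) : ℝ) -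
        cF G N start n := by
      funext n
      have htel := cF_telescope G hproper N start n
      simp only [Matrix.vecMul, dotProduct, Matrix.sub_apply, Matrix.one_apply]
      have : ∀ a, Λ a * ((if a = n then (1:ℝ) else 0) - M a n)
          = (∑ j ∈ Finset.range N, ell G j start a) *
            ((if a = n then (1:ℝ) else 0) - M a n) := fun a => rfl
      rw [Finset.sum_congr rfl fun a _ => this a]
      linarith
    have hΛK : Λ = Matrix.vecMul (fun n => (start.count (Sum.inl n) : ℝ) - cF G N start n) K := by
      calc Λ = Matrix.vecMul Λ 1 := by rw [Matrix.vecMul_one]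
        _ = Matrix.vecMul Λ ((1 - M) * K) := by rw [hKinv]
        _ = Matrix.vecMul (Matrix.vecMul Λ (1 - M)) K := by rw [Matrix.vecMul_vecMul]
        _ = _ := by rw [hvec]
    rw [hswap]
    have hΛa : ∀ a, Λ a ≤ ∑ b, (start.count (Sum.inl b) : ℝ) * K b a := by
      intro a
      rw [hΛK]
      simp only [Matrix.vecMul, dotProduct]
      refine Finset.sum_le_sum fun b _ => ?_
      refine mul_le_mul_of_nonneg_right ?_ (hKnn b a)
      have := cF_nonneg G N start b
      linarith
    calc ∑ a, Λ a ≤ ∑ a, ∑ b, (start.count (Sum.inl b) : ℝ) * K b a :=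
          Finset.sum_le_sum fun a _ => hΛa a
      _ = C := rfl
  -- the survival mass tends to zero
  have hC0 : 0 ≤ C := by
    have := hbound 0
    simpa using this
  have hbN : ∀ N : ℕ, 1 ≤ N → bSum G N start ≤ C / N := by
    intro N hN
    have hmul : (N : ℝ) * bSum G N start ≤ C := by
      calc (N : ℝ) * bSum G N start = ∑ _j ∈ Finset.range N, bSum G N start := by
            rw [Finset.sum_const, Finset.card_range, nsmul_eq_mul]
        _ ≤ ∑ j ∈ Finset.range N, bSum G j start := by
            refine Finset.sum_le_sum fun j hj => ?_
            exact bSum_antitone G hproper start (le_of_lt (Finset.mem_range.mp hj))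
        _ ≤ C := hbound N
    have hNpos : (0:ℝ) < N := by exact_mod_cast hN
    rw [le_div_iff₀ hNpos]
    linarith
  have hbtend : Tendsto (fun N : ℕ => bSum G N start) atTop (𝓝 0) := by
    have hdiv : Tendsto (fun N : ℕ => C / N) atTop (𝓝 0) :=
      tendsto_const_div_atTop_nhds_zero_nat C
    refine tendsto_of_tendsto_of_tendsto_of_le_of_le' tendsto_const_nhds hdiv ?_ ?_
    · exact Eventually.of_forall fun N => bSum_nonneg G N start
    · filter_upwards [eventually_ge_atTop 1] with N hN
      exact hbN N hN
  have haSum : Tendsto (fun N : ℕ => aSum G N start) atTop (𝓝 1) := by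
    have : Tendsto (fun N : ℕ => 1 - bSum G N start) atTop (𝓝 (1 - 0)) :=
      tendsto_const_nhds.sub hbtend
    rw [sub_zero] at this
    refine this.congr fun N => ?_
    have := aSum_add_bSum G hproper N start
    linarith
  -- conclude
  refine hasSum_of_isLUB_of_nonneg 1 (fun l => weight_nonneg G l.1) ?_
  constructor
  · rintro x ⟨F, rfl⟩
    set N : ℕ := F.sup (fun x => x.1.length) with hN
    have hsub : F.image Subtype.val ⊆ derivs G N start := by
      intro l hl
      obtain ⟨x, hx, rfl⟩ := Finset.mem_image.mp hl
      refine (mem_derivs G).mpr ⟨x.2, ?_⟩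
      exact Finset.le_sup (f := fun x : {l : List ρ // G.CompleteDeriv (0 : Fin m) l} =>
        x.1.length) hx
    calc ∑ i ∈ F, G.weight i.1
        = ∑ l ∈ F.image Subtype.val, G.weight l :=
          (Finset.sum_image fun x _ y _ h => Subtype.ext h).symm
      _ ≤ aSum G N start :=
          Finset.sum_le_sum_of_subset_of_nonneg hsub fun l _ _ => weight_nonneg G l
      _ ≤ 1 := aSum_le_one G hproper N start
  · intro w hw
    refine le_of_tendsto haSum (Eventually.of_forall fun N => ?_)
    set F : Finset {l : List ρ // G.CompleteDeriv (0 : Fin m) l} :=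
      (derivs G N start).attach.image
        (fun l => ⟨l.1, ((mem_derivs G).mp l.2).1⟩) with hF
    have hsum : ∑ i ∈ F, G.weight i.1 = aSum G N start := by
      rw [hF, Finset.sum_image]
      · rw [aSum, ← Finset.sum_attach (derivs G N start) (fun l => G.weight l)]
      · intro x hx y hy h
        exact Subtype.ext (Subtype.mk_eq_mk.mp h)
    have hle : ∑ i ∈ F, G.weight i.1 ≤ w := hw ⟨F, rfl⟩
    rw [hsum] at hle
    exact hle
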